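/- There exists a k-algebra isomorphism θ from the unital subalgebra of the k-linear endomorphism algebra of the space of derivations of P_n generated by all right multiplication operators R_D (for D ranging over all derivations of P_n) onto the matrix algebra M_n(P_n), such that θ(R_D) = J(D) for every derivation D of P_n. -/

import Mathlib

set_option maxHeartbeats 1600000


open MvPolynomial

/-- `Pn k n` is the polynomial algebra `k[x₁,…,xₙ]`. -/
abbrev Pn (k : Type*) [CommRing k] (n : ℕ) := MvPolynomial (Fin n) k

/-- `Der k n` is the space of `k`-linear derivations of `Pn k n`. -/
abbrev Der (k : Type*) [CommRing k] (n : ℕ) := Derivation k (Pn k n) (Pn k n)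

variable {k : Type*} [Field k] [CharZero k] {n : ℕ}

/-- The left-symmetric product of derivations: `(D · E)(xᵢ) = D (E xᵢ)`. -/
noncomputable def lsMul (D E : Der k n) : Der k n :=
  MvPolynomial.mkDerivation k (fun i => D (E (MvPolynomial.X i)))

/-- The Jacobian matrix of a derivation: `(J D)ᵢⱼ = ∂(D xᵢ)/∂xⱼ`. -/
noncomputable def jac (D : Der k n) : Matrix (Fin n) (Fin n) (Pn k n) :=
  Matrix.of fun i j => MvPolynomial.pderiv j (D (MvPolynomial.X i))

/-- The divergence of a derivation. -/
noncomputable def divg (D : Der k n) : Pn k n :=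
  ∑ i, MvPolynomial.pderiv i (D (MvPolynomial.X i))

/-- Right powers: `rpow D 1 = D`, `rpow D (r+1) = (rpow D r) · D` (for `r ≥ 1`). -/
noncomputable def rpow (D : Der k n) : ℕ → Der k n
  | 0 => D
  | 1 => D
  | (r+2) => lsMul (rpow D (r+1)) D

/-- Left powers: `lpow D 1 = D`, `lpow D (r+1) = D · (lpow D r)` (for `r ≥ 1`). -/
noncomputable def lpow (D : Der k n) : ℕ → Der k n
  | 0 => D
  | 1 => D
  | (r+2) => lsMul D (lpow D (r+1))

/-- Right multiplication operator `R_D : E ↦ E · D`, as a `k`-linear endomorphism. -/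
noncomputable def rmulOp (D : Der k n) : Der k n →ₗ[k] Der k n where
  toFun E := lsMul E D
  map_add' E₁ E₂ := by
    show (MvPolynomial.mkDerivationEquiv k) _ =
      (MvPolynomial.mkDerivationEquiv k) _ + (MvPolynomial.mkDerivationEquiv k) _
    rw [← map_add]
    exact congrArg _ (funext fun i => by simp)
  map_smul' c E := by
    show (MvPolynomial.mkDerivationEquiv k) _ = c • (MvPolynomial.mkDerivationEquiv k) _
    rw [← map_smul]
    exact congrArg _ (funext fun i => by simp)

/-- Left multiplication operator `L_D : E ↦ D · E`, as a `k`-linear endomorphism. -/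
noncomputable def lmulOp (D : Der k n) : Der k n →ₗ[k] Der k n where
  toFun E := lsMul D E
  map_add' E₁ E₂ := by
    show (MvPolynomial.mkDerivationEquiv k) _ =
      (MvPolynomial.mkDerivationEquiv k) _ + (MvPolynomial.mkDerivationEquiv k) _
    rw [← map_add]
    exact congrArg _ (funext fun i => by simp)
  map_smul' c E := by
    show (MvPolynomial.mkDerivationEquiv k) _ = c • (MvPolynomial.mkDerivationEquiv k) _
    rw [← map_smul]
    exact congrArg _ (funext fun i => by simp)

/-- `Zc F i a` is the coefficient of `t^i` in the image of `a` under `xⱼ ↦ xⱼ + t·fⱼ`. -/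
noncomputable def Zc (F : Fin n → Pn k n) (i : ℕ) (a : Pn k n) : Pn k n :=
  (MvPolynomial.aeval
    (fun j => Polynomial.C (MvPolynomial.X j) + Polynomial.C (F j) * Polynomial.X :
      Fin n → Polynomial (Pn k n)) a).coeff i

/-- `PsiOp F m a = Σ (−1)^{k−1} r_k Z_{r₁}(Z_{r₂}(⋯ Z_{r_k}(a)⋯))`, summed over
compositions `(r₁,…,r_k)` of `m`. -/
noncomputable def PsiOp (F : Fin n → Pn k n) (m : ℕ) (a : Pn k n) : Pn k n :=
  ∑ c : Composition m,
    (-1 : Pn k n) ^ (c.length - 1) * ((c.blocks.getLastD 0 : ℕ) : Pn k n) *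
      (c.blocks.foldr (fun r b => Zc F r b) a)

section Aux

open MvPolynomial

/-- The `Pn`-linear equivalence between derivations and vectors of values on variables. -/
noncomputable def derEquiv : Der k n ≃ₗ[Pn k n] (Fin n → Pn k n) where
  toFun D i := D (MvPolynomial.X i)
  map_add' _ _ := rfl
  map_smul' _ _ := rfl
  invFun := MvPolynomial.mkDerivation k
  left_inv _ := MvPolynomial.derivation_ext fun i => MvPolynomial.mkDerivation_X _ _ _
  right_inv _ := funext fun i => MvPolynomial.mkDerivation_X _ _ _

@[simp] lemma derEquiv_apply (E : Der k n) (i : Fin n) :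
    derEquiv E i = E (MvPolynomial.X i) := rfl

lemma derivation_sum_apply {ι : Type*} (s : Finset ι) (f : ι → Der k n) (p : Pn k n) :
    (∑ j ∈ s, f j) p = ∑ j ∈ s, f j p := by
  classical
  induction s using Finset.induction_on with
  | empty => simp
  | insert _ _ h ih => rw [Finset.sum_insert h, Finset.sum_insert h, Derivation.add_apply, ih]

/-- Chain rule: a derivation is determined by its values on variables. -/
lemma der_apply_eq_sum (E : Der k n) (p : Pn k n) :
    E p = ∑ j, MvPolynomial.pderiv j p * E (MvPolynomial.X j) := by
  classical
  have h : E = ∑ j : Fin n, E (MvPolynomial.X j) •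
      (MvPolynomial.pderiv j : Der k n) := by
    apply MvPolynomial.derivation_ext
    intro i
    rw [derivation_sum_apply]
    simp [Derivation.smul_apply, MvPolynomial.pderiv_X, Pi.single_apply, smul_eq_mul,
      mul_ite, Finset.sum_ite_eq]
  conv_lhs => rw [h]
  rw [derivation_sum_apply]
  exact Finset.sum_congr rfl fun j _ => by
    rw [Derivation.smul_apply, smul_eq_mul, mul_comm]

/-- The algebra homomorphism from matrices to `k`-linear endomorphisms of derivations. -/
noncomputable def psiHom : Matrix (Fin n) (Fin n) (Pn k n) →ₐ[k] Module.End k (Der k n) where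
  toFun M := ((derEquiv.symm.toLinearMap.restrictScalars k).comp
      ((Matrix.mulVecLin M).restrictScalars k)).comp
      (derEquiv.toLinearMap.restrictScalars k)
  map_one' := LinearMap.ext fun E => by
    show derEquiv.symm ((1 : Matrix (Fin n) (Fin n) (Pn k n)).mulVec (derEquiv E)) = E
    rw [Matrix.one_mulVec, LinearEquiv.symm_apply_apply]
  map_mul' M N := LinearMap.ext fun E => by
    show derEquiv.symm ((M * N).mulVec (derEquiv E)) =
      derEquiv.symm (M.mulVec (derEquiv (derEquiv.symm (N.mulVec (derEquiv E)))))
    rw [LinearEquiv.apply_symm_apply, Matrix.mulVec_mulVec]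
  map_zero' := LinearMap.ext fun E => by
    show derEquiv.symm ((0 : Matrix (Fin n) (Fin n) (Pn k n)).mulVec (derEquiv E))
      = (0 : Der k n)
    rw [Matrix.zero_mulVec, map_zero]
  map_add' M N := LinearMap.ext fun E => by
    show derEquiv.symm ((M + N).mulVec (derEquiv E)) =
      derEquiv.symm (M.mulVec (derEquiv E)) + derEquiv.symm (N.mulVec (derEquiv E))
    rw [Matrix.add_mulVec, map_add]
  commutes' c := LinearMap.ext fun E => by
    classical
    show derEquiv.symm (((algebraMap k (Matrix (Fin n) (Fin n) (Pn k n))) c).mulVec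
        (derEquiv E)) = c • E
    have h1 : ((algebraMap k (Matrix (Fin n) (Fin n) (Pn k n))) c).mulVec (derEquiv E)
        = derEquiv (c • E) := by
      funext i
      simp only [Matrix.mulVec, dotProduct, Matrix.algebraMap_matrix_apply]
      rw [Finset.sum_congr rfl (fun j _ => by
        rw [ite_mul, zero_mul])]
      rw [Finset.sum_ite_eq (Finset.univ : Finset (Fin n)) i
        (fun j => algebraMap k (Pn k n) c * derEquiv E j)]
      simp [Algebra.smul_def, Derivation.smul_apply]
    rw [h1, LinearEquiv.symm_apply_apply]

lemma psiHom_apply (M : Matrix (Fin n) (Fin n) (Pn k n)) (E : Der k n) :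
    psiHom M E = derEquiv.symm (M.mulVec (derEquiv E)) := rfl

lemma psiHom_injective :
    Function.Injective (psiHom : Matrix (Fin n) (Fin n) (Pn k n) →ₐ[k] Module.End k (Der k n)) := by
  classical
  intro M N h
  have hv : ∀ v : Fin n → Pn k n, M.mulVec v = N.mulVec v := by
    intro v
    have h2 := congrArg (fun f : Module.End k (Der k n) => derEquiv (f (derEquiv.symm v))) h
    simpa only [psiHom_apply, LinearEquiv.apply_symm_apply] using h2
  apply Matrix.ext
  intro i j
  have h3 := congrFun (hv (Pi.single j 1)) i
  simpa using h3

lemma psiHom_jac (D : Der k n) : psiHom (jac D) = rmulOp D := by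
  refine LinearMap.ext fun E => ?_
  rw [psiHom_apply, LinearEquiv.symm_apply_eq]
  funext i
  show ((jac D).mulVec (derEquiv E)) i = (rmulOp D E) (MvPolynomial.X i)
  have h1 : (rmulOp D E) (MvPolynomial.X i) = E (D (MvPolynomial.X i)) :=
    MvPolynomial.mkDerivation_X _ _ _
  rw [h1, der_apply_eq_sum E (D (MvPolynomial.X i))]
  simp only [Matrix.mulVec, dotProduct, jac, Matrix.of_apply, derEquiv_apply]

lemma pderiv_surjective (j : Fin n) (p : Pn k n) :
    ∃ g : Pn k n, MvPolynomial.pderiv j g = p := by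
  classical
  induction p using MvPolynomial.induction_on' with
  | monomial s r =>
    refine ⟨MvPolynomial.monomial (s + Finsupp.single j 1) (((s j : k) + 1)⁻¹ * r), ?_⟩
    rw [MvPolynomial.pderiv_monomial]
    have hs : s + Finsupp.single j 1 - Finsupp.single j 1 = s := by
      ext a
      simp [Finsupp.sub_apply, Finsupp.add_apply, Finsupp.single_apply]
    have hj' : (s + Finsupp.single j 1 : Fin n →₀ ℕ) j = s j + 1 := by
      rw [Finsupp.add_apply, Finsupp.single_eq_same]
    rw [hs, hj']
    congr 1
    have hne : ((s j : k) + 1) ≠ 0 := by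
      exact_mod_cast Nat.cast_add_one_ne_zero (R := k) (s j)
    push_cast
    rw [mul_comm _ r, mul_assoc, inv_mul_cancel₀ hne, mul_one]
  | add p q hp hq =>
    obtain ⟨g₁, hg₁⟩ := hp
    obtain ⟨g₂, hg₂⟩ := hq
    exact ⟨g₁ + g₂, by rw [map_add, hg₁, hg₂]⟩

lemma stdBasisMatrix_mem (i j : Fin n) (p : Pn k n) :
    Matrix.single i j p ∈
      Algebra.adjoin k (Set.range (jac : Der k n → Matrix (Fin n) (Fin n) (Pn k n))) := by
  classical
  obtain ⟨g, hg⟩ := pderiv_surjective j p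
  have h1 : jac (MvPolynomial.mkDerivation k (Pi.single i g)) ∈
      Algebra.adjoin k (Set.range (jac : Der k n → Matrix (Fin n) (Fin n) (Pn k n))) :=
    Algebra.subset_adjoin (Set.mem_range_self _)
  have h2 : jac (MvPolynomial.mkDerivation k
      (Pi.single j (MvPolynomial.X j : Pn k n))) ∈
      Algebra.adjoin k (Set.range (jac : Der k n → Matrix (Fin n) (Fin n) (Pn k n))) :=
    Algebra.subset_adjoin (Set.mem_range_self _)
  have hA : jac (MvPolynomial.mkDerivation k (Pi.single j (MvPolynomial.X j : Pn k n)))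
      = Matrix.single j j 1 := by
    apply Matrix.ext
    intro a b
    simp only [jac, Matrix.of_apply, MvPolynomial.mkDerivation_X, Matrix.single]
    rcases eq_or_ne a j with ha | ha
    · subst ha
      rw [Pi.single_eq_same]
      rcases eq_or_ne b a with hb | hb
      · subst hb
        simp [MvPolynomial.pderiv_X_self]
      · rw [MvPolynomial.pderiv_X_of_ne hb.symm]
        simp [hb.symm]
    · rw [Pi.single_eq_of_ne ha]
      simp [ha.symm, map_zero]
  have key : jac (MvPolynomial.mkDerivation k (Pi.single i g)) *
      jac (MvPolynomial.mkDerivation k (Pi.single j (MvPolynomial.X j : Pn k n))) =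
      Matrix.single i j p := by
    rw [hA]
    apply Matrix.ext
    intro a b
    rcases eq_or_ne b j with hb | hb
    · subst hb
      rw [Matrix.mul_single_apply_same, mul_one]
      simp only [jac, Matrix.of_apply, MvPolynomial.mkDerivation_X, Matrix.single]
      rcases eq_or_ne a i with ha | ha
      · subst ha
        rw [Pi.single_eq_same, hg]
        simp
      · rw [Pi.single_eq_of_ne ha]
        simp [ha.symm, map_zero]
    · rw [Matrix.mul_single_apply_of_ne 1 j j a b hb]
      simp [Matrix.single, Ne.symm hb]
  exact key ▸ mul_mem h1 h2

lemma adjoin_jac_eq_top :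
    Algebra.adjoin k (Set.range (jac : Der k n → Matrix (Fin n) (Fin n) (Pn k n))) = ⊤ := by
  classical
  rw [eq_top_iff]
  rintro M -
  rw [Matrix.matrix_eq_sum_single M]
  exact sum_mem fun i _ => sum_mem fun j _ => stdBasisMatrix_mem i j (M i j)

end Aux

/-- the unital subalgebra of `End_k(Der)` generated by the right
multiplication operators is isomorphic to `Mₙ(Pₙ)` via `R_D ↦ J(D)`. -/
theorem exists_rightMultiplicationAlgebra_iso (hn : 1 ≤ n) :
    ∃ θ : (Algebra.adjoin k (Set.range (rmulOp : Der k n → Module.End k (Der k n)))) ≃ₐ[k]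
        Matrix (Fin n) (Fin n) (Pn k n),
      ∀ D : Der k n,
        θ ⟨rmulOp D, Algebra.subset_adjoin (Set.mem_range_self D)⟩ = jac D := by
  have hrange : Algebra.adjoin k (Set.range (rmulOp : Der k n → Module.End k (Der k n)))
      = (psiHom : Matrix (Fin n) (Fin n) (Pn k n) →ₐ[k] Module.End k (Der k n)).range := by
    have h0 : (rmulOp : Der k n → Module.End k (Der k n)) =
        (psiHom : Matrix (Fin n) (Fin n) (Pn k n) →ₐ[k] Module.End k (Der k n)) ∘ jac :=
      funext fun D => (psiHom_jac D).symm
    rw [h0, Set.range_comp, ← AlgHom.map_adjoin, adjoin_jac_eq_top, Algebra.map_top]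
  refine ⟨(Subalgebra.equivOfEq _ _ hrange).trans
    (AlgEquiv.ofInjective psiHom psiHom_injective).symm, fun D => ?_⟩
  rw [AlgEquiv.trans_apply, AlgEquiv.symm_apply_eq]
  apply Subtype.ext
  rw [AlgEquiv.ofInjective_apply, psiHom_jac]
  rfl
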